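/- (Area formula for the Hausdorff measure I.) Let X be a metric space, μ a measure over X, α > 0, c_α > 0, and A ⊆ X. Assume: (1) μ is both a regular measure and a Borel measure; (2) ℱ_{μ,ζ_α} covers A finely; (3) A is a Borel set; (4) A has a countable covering by open sets of finite μ-measure; (5) the set {x ∈ A : 𝔡^α(μ,x) = 0} is σ-finite with respect to ℋ^α; (6) μ⌊A is absolutely continuous with respect to ℋ^α⌊A. Then 𝔡^α(μ,·): A → [0,+∞] is Borel and for every Borel set B ⊆ A one has μ(B) = ∫_B 𝔡^α(μ,x) dℋ^α(x). -/

import Mathlib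

open MeasureTheory Set ENNReal Filter

noncomputable section

/-- The subclass `𝒮_{μ,ζ}` of a class of sets `𝒮`, obtained by removing the sets `S`
where `ζ S = μ S = 0` or `ζ S = μ S = +∞`. -/
def goodClass {X : Type*} [MetricSpace X] (μ : OuterMeasure X) (𝒮 : Set (Set X))
    (ζ : Set X → ℝ≥0∞) : Set (Set X) :=
  {S ∈ 𝒮 | ¬ ((ζ S = 0 ∧ μ S = 0) ∨ (ζ S = ⊤ ∧ μ S = ⊤))}

/-- The quotient function `Q_{μ,ζ}`: equals `+∞` if `ζ S = 0`, `μ S / ζ S` if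
`0 < ζ S < +∞`, and `0` if `ζ S = +∞` (note `a / ⊤ = 0` in `ℝ≥0∞`). -/
def fedQuot {X : Type*} [MetricSpace X] (μ : OuterMeasure X) (ζ : Set X → ℝ≥0∞)
    (S : Set X) : ℝ≥0∞ :=
  if ζ S = 0 then ⊤ else μ S / ζ S

/-- A family of sets `ℱ` covers `A` finely: for every `a ∈ A` and every `ε > 0` there is
`S ∈ ℱ` containing `a` with `diam S < ε`. -/
def CoversFinely {X : Type*} [MetricSpace X] (ℱ : Set (Set X)) (A : Set X) : Prop :=
  ∀ a ∈ A, ∀ ε : ℝ≥0∞, 0 < ε → ∃ S ∈ ℱ, a ∈ S ∧ EMetric.diam S < ε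

/-- The Federer density `F^ζ(μ,x)`. -/
def federerDensity {X : Type*} [MetricSpace X] (μ : OuterMeasure X) (𝒮 : Set (Set X))
    (ζ : Set X → ℝ≥0∞) (x : X) : ℝ≥0∞ :=
  ⨅ (ε : ℝ≥0∞) (_ : 0 < ε),
    ⨆ (S : Set X) (_ : S ∈ goodClass μ 𝒮 ζ) (_ : x ∈ S) (_ : EMetric.diam S < ε),
      fedQuot μ ζ S

/-- The size-`δ` premeasure `φ_{ζ,δ}` of the Carathéodory construction. -/
def preCarMeasure {X : Type*} [MetricSpace X] (𝒮 : Set (Set X)) (ζ : Set X → ℝ≥0∞)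
    (δ : ℝ≥0∞) (R : Set X) : ℝ≥0∞ :=
  ⨅ (E : ℕ → Set X) (_ : ∀ j, E j ∈ 𝒮) (_ : ∀ j, EMetric.diam (E j) ≤ δ)
    (_ : R ⊆ ⋃ j, E j), ∑' j, ζ (E j)

/-- The Carathéodory measure `ψ_ζ`. -/
def carMeasure {X : Type*} [MetricSpace X] (𝒮 : Set (Set X)) (ζ : Set X → ℝ≥0∞)
    (R : Set X) : ℝ≥0∞ :=
  ⨆ (δ : ℝ≥0∞) (_ : 0 < δ), preCarMeasure 𝒮 ζ δ R

/-- The `τ`-enlargement `Ŝ` of a set `S`. -/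
def enlargement {X : Type*} [MetricSpace X] (μ : OuterMeasure X) (𝒮 : Set (Set X))
    (ζ : Set X → ℝ≥0∞) (τ : ℝ) (S : Set X) : Set X :=
  ⋃₀ {T ∈ goodClass μ 𝒮 ζ | (T ∩ S).Nonempty ∧
      EMetric.diam T ≤ ENNReal.ofReal τ * EMetric.diam S}

/-- `μ` is a regular (outer) measure: every set is contained in a `μ`-measurable set of
the same measure. -/
def IsRegularOM {X : Type*} [MetricSpace X] (μ : OuterMeasure X) : Prop :=
  ∀ E : Set X, ∃ F : Set X, E ⊆ F ∧ μ.IsCaratheodory F ∧ μ F = μ E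

/-- `μ` is a Borel (outer) measure: every Borel set is `μ`-measurable. -/
def IsBorelOM {X : Type*} [MetricSpace X] (μ : OuterMeasure X) : Prop :=
  ∀ E : Set X, MeasurableSet[borel X] E → μ.IsCaratheodory E

/-- `μ` is a Borel regular (outer) measure. -/
def IsBorelRegularOM {X : Type*} [MetricSpace X] (μ : OuterMeasure X) : Prop :=
  IsBorelOM μ ∧ ∀ E : Set X, ∃ B : Set X, E ⊆ B ∧ MeasurableSet[borel X] B ∧ μ B = μ E

/-- Carathéodory measurability of a set with respect to a set function. -/
def SetFnCaratheodory {X : Type*} (ν : Set X → ℝ≥0∞) (E : Set X) : Prop :=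
  ∀ T : Set X, ν T = ν (T ∩ E) + ν (T \ E)

/-- `μ⌊A << ν⌊A`: absolute continuity of the restrictions to `A`. -/
def AbsContOn {X : Type*} [MetricSpace X] (μ : OuterMeasure X) (ν : Set X → ℝ≥0∞)
    (A : Set X) : Prop :=
  ∀ E : Set X, ν (A ∩ E) = 0 → μ (A ∩ E) = 0

/-- `S` is σ-finite with respect to the set function `ν`. -/
def SigmaFiniteWrt {X : Type*} (ν : Set X → ℝ≥0∞) (S : Set X) : Prop :=
  ∃ E : ℕ → Set X, S ⊆ ⋃ j, E j ∧ ∀ j, ν (E j) < ⊤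

/-- The integral `∫_B f dν` with respect to an (outer) set function `ν`,
via the layer-cake formula. -/
def omIntegral {X : Type*} (ν : Set X → ℝ≥0∞) (B : Set X) (f : X → ℝ≥0∞) : ℝ≥0∞ :=
  ∫⁻ t in Set.Ioi (0 : ℝ), ν {x ∈ B | ENNReal.ofReal t < f x}

/-- The enlargement condition: there are `c ≥ 1` and `η > 0` such that every
`S ∈ 𝒮_{μ,ζ}` admits `S̃ ∈ 𝒮` with `Ŝ ⊆ S̃`, `diam S̃ ≤ c diam S` and `ζ S̃ ≤ η ζ S`. -/
def EnlCondition {X : Type*} [MetricSpace X] (μ : OuterMeasure X) (𝒮 : Set (Set X))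
    (ζ : Set X → ℝ≥0∞) (τ : ℝ) : Prop :=
  ∃ c : ℝ, 1 ≤ c ∧ ∃ η : ℝ, 0 < η ∧ ∀ S ∈ goodClass μ 𝒮 ζ, ∃ S' ∈ 𝒮,
    enlargement μ 𝒮 ζ τ S ⊆ S' ∧ EMetric.diam S' ≤ ENNReal.ofReal c * EMetric.diam S ∧
      ζ S' ≤ ENNReal.ofReal η * ζ S

/-- The gauge `ζ_α(S) = c_α (diam S)^α`. -/
def zetaDiam {X : Type*} [MetricSpace X] (cα α : ℝ) (S : Set X) : ℝ≥0∞ :=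
  ENNReal.ofReal cα * EMetric.diam S ^ α

/-- The family `ℱ` of closed subsets of `X`. -/
def closedSets (X : Type*) [MetricSpace X] : Set (Set X) := {S | IsClosed S}

/-- The family `ℱ_b` of closed balls of `X` (with positive radius). -/
def closedBalls (X : Type*) [MetricSpace X] : Set (Set X) :=
  {S | ∃ (y : X) (r : ℝ), 0 < r ∧ S = Metric.closedBall y r}

/-- The family `ℱ_o` of open balls of `X` (with positive radius). -/
def openBalls (X : Type*) [MetricSpace X] : Set (Set X) :=
  {S | ∃ (y : X) (r : ℝ), 0 < r ∧ S = Metric.ball y r}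

/-- The `α`-dimensional Hausdorff measure `ℋ^α` with normalizing constant `c_α`. -/
def hausdorffMeasureC (X : Type*) [MetricSpace X] (cα α : ℝ) : Set X → ℝ≥0∞ :=
  carMeasure (closedSets X) (zetaDiam cα α)

/-- The `α`-dimensional spherical Hausdorff measure `𝒮^α` with constant `c_α`. -/
def sphericalMeasureC (X : Type*) [MetricSpace X] (cα α : ℝ) : Set X → ℝ≥0∞ :=
  carMeasure (closedBalls X) (zetaDiam cα α)

/-- `X` is diametrically regular. -/
def DiametricallyRegular (X : Type*) [MetricSpace X] : Prop :=
  ∀ x : X, ∃ R > (0 : ℝ), ∃ δ > (0 : ℝ), ∀ y ∈ Metric.ball x R,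
    ContinuousOn (fun r : ℝ => EMetric.diam (Metric.ball y r)) (Set.Ioo 0 δ)

end

noncomputable section Stmt7Aux

namespace Stmt7Aux

open MeasureTheory Set ENNReal Filter

variable {X : Type*} [MetricSpace X]

section Zeta

variable {cα α : ℝ}

lemma zeta_closure (cα α : ℝ) (S : Set X) :
    zetaDiam cα α (closure S) = zetaDiam cα α S := by
  simp [zetaDiam, EMetric.diam, Metric.ediam_closure]

lemma zeta_empty (hα : 0 < α) : zetaDiam cα α (∅ : Set X) = 0 := by
  simp [zetaDiam, EMetric.diam, ENNReal.zero_rpow_of_pos hα]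

lemma zeta_mono (hα : 0 < α) {S T : Set X} (h : S ⊆ T) :
    zetaDiam cα α S ≤ zetaDiam cα α T := by
  exact mul_le_mul_right (ENNReal.rpow_le_rpow (EMetric.diam_mono h) hα.le) _

lemma zeta_eq_zero_iff (hα : 0 < α) (hc : 0 < cα) {S : Set X} :
    zetaDiam cα α S = 0 ↔ EMetric.diam S = 0 := by
  simp only [zetaDiam, mul_eq_zero, ENNReal.ofReal_eq_zero, not_le.2 hc, false_or,
    ENNReal.rpow_eq_zero_iff]
  constructor
  · rintro (⟨h, -⟩ | ⟨h, hneg⟩)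
    · exact h
    · exact absurd hneg (not_lt.2 hα.le)
  · intro h; exact Or.inl ⟨h, hα⟩

lemma zeta_eq_top_iff (hα : 0 < α) (hc : 0 < cα) {S : Set X} :
    zetaDiam cα α S = ⊤ ↔ EMetric.diam S = ⊤ := by
  simp only [zetaDiam, ENNReal.mul_eq_top, ENNReal.ofReal_eq_zero, ENNReal.ofReal_ne_top,
    false_and, or_false, ENNReal.rpow_eq_top_iff, not_le.2 hc]
  constructor
  · rintro ⟨-, (⟨h, hneg⟩ | ⟨h, -⟩)⟩
    · exact absurd hneg (not_lt.2 hα.le)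
    · exact h
  · intro h; exact ⟨fun hh => hc.not_ge (ENNReal.ofReal_eq_zero.1 hh), Or.inr ⟨h, hα⟩⟩

lemma zeta_ne_top (hα : 0 < α) (hc : 0 < cα) {S : Set X} (h : EMetric.diam S ≠ ⊤) :
    zetaDiam cα α S ≠ ⊤ := fun hh => h ((zeta_eq_top_iff hα hc).1 hh)

/-- A closed set with `ζ S ∉ {0, ∞}` belongs to the good class. -/
lemma mem_goodClass (μ : OuterMeasure X) {S : Set X} (hS : IsClosed S)
    (h0 : zetaDiam cα α S ≠ 0) (ht : zetaDiam cα α S ≠ ⊤) :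
    S ∈ goodClass μ (closedSets X) (zetaDiam cα α) := by
  refine ⟨hS, ?_⟩
  rintro (⟨h, -⟩ | ⟨h, -⟩) <;> [exact h0 h; exact ht h]

lemma fedQuot_of_pos (μ : OuterMeasure X) {S : Set X} (h0 : zetaDiam cα α S ≠ 0) :
    fedQuot μ (zetaDiam cα α) S = μ S / zetaDiam cα α S := if_neg h0

end Zeta

section PsiEq

variable {cα α : ℝ}

/-- The pre-Carathéodory measure coincides with Mathlib's `mkMetric'.pre`. -/
lemma preCar_eq (hα : 0 < α) (δ : ℝ≥0∞) (R : Set X) :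
    preCarMeasure (closedSets X) (zetaDiam cα α) δ R =
      OuterMeasure.mkMetric'.pre (fun s : Set X => zetaDiam cα α s) δ R := by
  rw [OuterMeasure.mkMetric'.pre, OuterMeasure.boundedBy_apply]
  apply le_antisymm
  · refine le_iInf₂ fun t ht => ?_
    by_cases hdiam : ∀ n, EMetric.diam (t n) ≤ δ
    · have : preCarMeasure (closedSets X) (zetaDiam cα α) δ R ≤ ∑' n, zetaDiam cα α (t n) := by
        refine iInf_le_of_le (fun n => closure (t n)) ?_
        refine iInf_le_of_le (fun n => isClosed_closure) ?_
        refine iInf_le_of_le (fun n => by rw [EMetric.diam, Metric.ediam_closure]; exact hdiam n) ?_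
        refine iInf_le_of_le (ht.trans (iUnion_mono fun n => subset_closure)) ?_
        exact le_of_eq (by simp [zeta_closure])
      refine this.trans (ENNReal.tsum_le_tsum fun n => ?_)
      rcases eq_empty_or_nonempty (t n) with h | h
      · simp [h, zeta_empty hα]
      · rw [iSup_pos h,
          extend_eq (fun s (_ : Metric.ediam s ≤ δ) => zetaDiam cα α s) (hdiam n)]
    · push_neg at hdiam
      obtain ⟨n, hn⟩ := hdiam
      have hne : (t n).Nonempty := by
        rcases eq_empty_or_nonempty (t n) with h | h
        · exact absurd (by simp [h, EMetric.diam] : EMetric.diam (t n) ≤ δ) (not_le.2 hn)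
        · exact h
      have : (∑' n, ⨆ _ : (t n).Nonempty,
          extend (fun s (_ : Metric.ediam s ≤ δ) => zetaDiam cα α s) (t n)) = ⊤ := by
        refine ENNReal.tsum_eq_top_of_eq_top ⟨n, ?_⟩
        rw [iSup_pos hne]
        exact extend_eq_top (fun s (_ : Metric.ediam s ≤ δ) => zetaDiam cα α s) (not_le.2 hn)
      simp [this]
  · refine le_iInf fun E => le_iInf fun hE => le_iInf fun hEd => le_iInf fun hER => ?_
    refine iInf₂_le_of_le E hER (ENNReal.tsum_le_tsum fun n => ?_)
    rcases eq_empty_or_nonempty (E n) with h | h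
    · simp [h]
    · rw [iSup_pos h,
        extend_eq (fun s (_ : Metric.ediam s ≤ δ) => zetaDiam cα α s) (hEd n)]

/-- `hausdorffMeasureC` coincides with Mathlib's `mkMetric'` outer measure. -/
lemma psi_eq (hα : 0 < α) (R : Set X) :
    hausdorffMeasureC X cα α R =
      OuterMeasure.mkMetric' (fun s : Set X => zetaDiam cα α s) R := by
  rw [OuterMeasure.mkMetric', OuterMeasure.iSup_apply]
  rw [hausdorffMeasureC, carMeasure]
  refine iSup_congr fun δ => ?_
  rw [OuterMeasure.iSup_apply]
  exact iSup_congr fun hδ => preCar_eq hα δ R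

end PsiEq
section Density

variable (μ : OuterMeasure X) (cα α : ℝ)

/-- The inner supremum in the definition of the Federer density. -/
def gsup (ε : ℝ≥0∞) (x : X) : ℝ≥0∞ :=
  ⨆ (S : Set X) (_ : S ∈ goodClass μ (closedSets X) (zetaDiam cα α)) (_ : x ∈ S)
    (_ : EMetric.diam S < ε), fedQuot μ (zetaDiam cα α) S

lemma density_eq_iInf (x : X) :
    federerDensity μ (closedSets X) (zetaDiam cα α) x
      = ⨅ (ε : ℝ≥0∞) (_ : 0 < ε), gsup μ cα α ε x := rfl

lemma gsup_mono {ε ε' : ℝ≥0∞} (h : ε ≤ ε') (x : X) :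
    gsup μ cα α ε x ≤ gsup μ cα α ε' x := by
  refine iSup_mono fun S => iSup_mono fun hS => iSup_mono fun hx => ?_
  exact iSup_le fun hd => le_iSup_of_le (hd.trans_le h) le_rfl

lemma density_eq_iInf_nat (x : X) :
    federerDensity μ (closedSets X) (zetaDiam cα α) x
      = ⨅ n : ℕ, gsup μ cα α ((n : ℝ≥0∞))⁻¹ x := by
  rw [density_eq_iInf]
  apply le_antisymm
  · refine le_iInf fun n => iInf₂_le _ ?_
    simp [pos_iff_ne_zero]
  · refine le_iInf₂ fun ε hε => ?_
    obtain ⟨n, hn⟩ := ENNReal.exists_inv_nat_lt hε.ne'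
    exact iInf_le_of_le n (gsup_mono μ cα α hn.le x)

lemma le_gsup {ε : ℝ≥0∞} {x : X} {S : Set X}
    (hS : S ∈ goodClass μ (closedSets X) (zetaDiam cα α)) (hx : x ∈ S)
    (hd : EMetric.diam S < ε) : fedQuot μ (zetaDiam cα α) S ≤ gsup μ cα α ε x := by
  refine le_iSup_of_le S ?_
  rw [iSup_pos hS, iSup_pos hx, iSup_pos hd]

/-- If `t < 𝔡(μ,x)` then at every scale there is a good set with quotient `> t`. -/
lemma exists_of_lt_density {x : X} {t : ℝ≥0∞}
    (h : t < federerDensity μ (closedSets X) (zetaDiam cα α) x) {ε : ℝ≥0∞} (hε : 0 < ε) :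
    ∃ S ∈ goodClass μ (closedSets X) (zetaDiam cα α), x ∈ S ∧ EMetric.diam S < ε ∧
      t < fedQuot μ (zetaDiam cα α) S := by
  rw [density_eq_iInf] at h
  have h2 : t < gsup μ cα α ε x := h.trans_le (iInf₂_le ε hε)
  rw [gsup] at h2
  obtain ⟨S, hS⟩ := lt_iSup_iff.1 h2
  obtain ⟨h1, hS⟩ := lt_iSup_iff.1 hS
  obtain ⟨h2', hS⟩ := lt_iSup_iff.1 hS
  obtain ⟨h3, hS⟩ := lt_iSup_iff.1 hS
  exact ⟨S, h1, h2', h3, hS⟩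

/-- If `𝔡(μ,x) < t` then at some scale all good sets have quotient `< t`. -/
lemma exists_scale_of_density_lt {x : X} {t : ℝ≥0∞}
    (h : federerDensity μ (closedSets X) (zetaDiam cα α) x < t) :
    ∃ n : ℕ, ∀ S ∈ goodClass μ (closedSets X) (zetaDiam cα α), x ∈ S →
      EMetric.diam S < ((n : ℝ≥0∞))⁻¹ → fedQuot μ (zetaDiam cα α) S < t := by
  rw [density_eq_iInf_nat] at h
  obtain ⟨n, hn⟩ := iInf_lt_iff.1 h
  exact ⟨n, fun S hS hx hd => (le_gsup μ cα α hS hx hd).trans_lt hn⟩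

variable {cα α : ℝ}

/-- The inner supremum `gsup` is lower semicontinuous. -/
lemma gsup_lsc (hα : 0 < α) (hc : 0 < cα) (ε : ℝ≥0∞) :
    LowerSemicontinuous (gsup μ cα α ε) := by
  intro x c hcx
  rw [gsup] at hcx
  obtain ⟨S, hS⟩ := lt_iSup_iff.1 hcx
  obtain ⟨hSG, hS⟩ := lt_iSup_iff.1 hS
  obtain ⟨hxS, hS⟩ := lt_iSup_iff.1 hS
  obtain ⟨hdS, hQ⟩ := lt_iSup_iff.1 hS
  have hctop : c ≠ ⊤ := hQ.ne_top
  -- `ζ S ≠ ∞`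
  have hζtop : zetaDiam cα α S ≠ ⊤ := by
    intro htop
    have h0 : fedQuot μ (zetaDiam cα α) S = 0 := by
      rw [fedQuot, if_neg (by simp [htop]), htop, ENNReal.div_top]
    exact (not_lt.2 zero_le) (h0 ▸ hQ)
  have hdfin : EMetric.diam S ≠ ⊤ := fun h => hζtop ((zeta_eq_top_iff hα hc).2 h)
  -- key inequality `c * ζ S < μ S`
  have hkey : c * zetaDiam cα α S < μ S := by
    by_cases h0 : zetaDiam cα α S = 0
    · have hμ0 : μ S ≠ 0 := fun hμ => hSG.2 (Or.inl ⟨h0, hμ⟩)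
      rw [h0, mul_zero]
      exact pos_iff_ne_zero.2 hμ0
    · rw [fedQuot, if_neg h0] at hQ
      exact (ENNReal.lt_div_iff_mul_lt (Or.inl h0) (Or.inl hζtop)).1 hQ
  have hμS0 : μ S ≠ 0 := fun h => by simp [h] at hkey
  -- continuity of the enlarged gauge
  have hT1 : Tendsto (fun η : ℝ≥0∞ => EMetric.diam S + η) (nhds 0) (nhds (EMetric.diam S)) := by
    have := (continuous_const.add continuous_id :
      Continuous fun η : ℝ≥0∞ => EMetric.diam S + η).tendsto 0
    simpa using (tendsto_const_nhds : Tendsto (fun _ : ℝ≥0∞ => EMetric.diam S) (nhds 0)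
      (nhds (EMetric.diam S))).add tendsto_id
  have hT2 : Tendsto (fun η : ℝ≥0∞ => c * (ENNReal.ofReal cα * (EMetric.diam S + η) ^ α))
      (nhds 0) (nhds (c * zetaDiam cα α S)) := by
    refine ENNReal.Tendsto.const_mul ?_ (Or.inr hctop)
    refine ENNReal.Tendsto.const_mul ?_ (Or.inr ENNReal.ofReal_ne_top)
    exact (ENNReal.continuous_rpow_const.tendsto _).comp hT1
  have E1 : ∀ᶠ η : ℝ≥0∞ in nhds 0,
      c * (ENNReal.ofReal cα * (EMetric.diam S + η) ^ α) < μ S :=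
    hT2.eventually_lt_const hkey
  have E2 : ∀ᶠ η : ℝ≥0∞ in nhds 0, EMetric.diam S + η < ε := hT1.eventually_lt_const hdS
  have E3 : ∀ᶠ η : ℝ≥0∞ in nhds 0, η < 1 := tendsto_id.eventually_lt_const zero_lt_one
  haveI : (nhdsWithin (0 : ℝ≥0∞) (Ioi 0)).NeBot := nhdsGT_neBot_of_exists_gt ⟨1, zero_lt_one⟩
  obtain ⟨η, hη, hη0⟩ :=
    ((((E1.and (E2.and E3))).filter_mono
      (nhdsWithin_le_nhds (s := Ioi (0 : ℝ≥0∞)))).and self_mem_nhdsWithin).exists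
  obtain ⟨hE1, hE2, hE3⟩ := hη
  replace hη0 : (0:ℝ≥0∞) < η := hη0
  set ζmax : ℝ≥0∞ := ENNReal.ofReal cα * (EMetric.diam S + η) ^ α with hζmax
  have hsum_fin : EMetric.diam S + η ≠ ⊤ :=
    (ENNReal.add_lt_top.2 ⟨hdfin.lt_top, hE3.trans ENNReal.one_lt_top⟩).ne
  have hζmaxtop : ζmax ≠ ⊤ :=
    ENNReal.mul_ne_top ENNReal.ofReal_ne_top (ENNReal.rpow_ne_top_of_nonneg hα.le hsum_fin)
  -- conclude
  have hball : EMetric.ball x η ∈ nhds x := EMetric.ball_mem_nhds x hη0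
  filter_upwards [hball] with y hy
  set T := S ∪ {y} with hT
  have hyT : y ∈ T := mem_union_right _ rfl
  have hTclosed : IsClosed T := IsClosed.union hSG.1 isClosed_singleton
  have hdT : EMetric.diam T ≤ EMetric.diam S + edist x y := by
    rw [hT, union_singleton]
    simpa [EMetric.diam] using EMetric.diam_union hxS (mem_singleton y)
  have hedist : edist x y ≤ η := by
    rw [edist_comm]; exact (EMetric.mem_ball.1 hy).le
  have hdT' : EMetric.diam T ≤ EMetric.diam S + η :=
    hdT.trans (add_le_add_right hedist _)
  have hdTε : EMetric.diam T < ε := lt_of_le_of_lt hdT' hE2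
  have hζT : zetaDiam cα α T ≤ ζmax :=
    mul_le_mul_right (ENNReal.rpow_le_rpow hdT' hα.le) _
  have hμT : μ S ≤ μ T := μ.mono subset_union_left
  have hTgood : T ∈ goodClass μ (closedSets X) (zetaDiam cα α) := by
    refine ⟨hTclosed, ?_⟩
    rintro (⟨-, hμ0⟩ | ⟨hζ, -⟩)
    · exact hμS0 (le_antisymm (hμ0 ▸ hμT) (zero_le))
    · exact hζmaxtop (top_le_iff.1 (hζ ▸ hζT))
  have hQT : c < fedQuot μ (zetaDiam cα α) T := by
    rw [fedQuot]
    split_ifs with h0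
    · exact hctop.lt_top
    · refine (ENNReal.lt_div_iff_mul_lt (Or.inl h0)
        (Or.inl fun ht => hζmaxtop (top_le_iff.1 (ht ▸ hζT)))).2 ?_
      calc c * zetaDiam cα α T ≤ c * ζmax := mul_le_mul_right hζT c
      _ < μ S := hE1
      _ ≤ μ T := hμT
  exact hQT.trans_le (le_gsup μ cα α hTgood hyT hdTε)

/-- The Federer density is a Borel function. -/
lemma density_measurable [MeasurableSpace X] [OpensMeasurableSpace X]
    (hα : 0 < α) (hc : 0 < cα) :
    Measurable (federerDensity μ (closedSets X) (zetaDiam cα α)) := by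
  have h : federerDensity μ (closedSets X) (zetaDiam cα α)
      = fun x => ⨅ n : ℕ, gsup μ cα α ((n : ℝ≥0∞))⁻¹ x :=
    funext (density_eq_iInf_nat μ cα α)
  rw [h]
  exact Measurable.iInf fun n => (gsup_lsc μ hα hc _).measurable

end Density
section Infra

variable (μ : OuterMeasure X)

lemma borelOM_le_caratheodory (hB : IsBorelOM μ) : borel X ≤ μ.caratheodory :=
  fun s hs => (OuterMeasure.isCaratheodory_iff μ).2 (hB s hs)

/-- Continuity from below for regular outer measures. -/
lemma regular_iUnion_of_monotone (hreg : IsRegularOM μ) {A : ℕ → Set X}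
    (hmono : Monotone A) : μ (⋃ n, A n) = ⨆ n, μ (A n) := by
  refine le_antisymm ?_ (iSup_le fun n => μ.mono (subset_iUnion A n))
  choose F hAF hFmeas hFμ using fun n => hreg (A n)
  classical
  letI : MeasurableSpace X := μ.caratheodory
  set ν : Measure X := μ.toMeasure le_rfl with hν
  set G : ℕ → Set X := fun n => ⋂ m ∈ Ici n, F m with hG
  have hGmeas : ∀ n, MeasurableSet (G n) := fun n =>
    MeasurableSet.biInter (to_countable _) fun m _ =>
      (OuterMeasure.isCaratheodory_iff μ).2 (hFmeas m)
  have hAG : ∀ n, A n ⊆ G n := fun n =>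
    subset_iInter₂ fun m hm => (hmono hm).trans (hAF m)
  have hGF : ∀ n, G n ⊆ F n := fun n => iInter₂_subset n le_rfl
  have hGμ : ∀ n, μ (G n) = μ (A n) := fun n =>
    le_antisymm ((μ.mono (hGF n)).trans (hFμ n).le) (μ.mono (hAG n))
  have hGmono : Monotone G := fun n m h =>
    biInter_subset_biInter_left (Ici_subset_Ici.2 h)
  have hνG : ∀ n, ν (G n) = μ (G n) := fun n => toMeasure_apply μ le_rfl (hGmeas n)
  calc μ (⋃ n, A n) ≤ μ (⋃ n, G n) := μ.mono (iUnion_mono hAG)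
    _ ≤ ν (⋃ n, G n) := le_toMeasure_apply μ le_rfl _
    _ = ⨆ n, ν (G n) := hGmono.directed_le.measure_iUnion
    _ = ⨆ n, μ (A n) := by simp_rw [hνG, hGμ]

variable {cα α : ℝ}

lemma psi_mono (hα : 0 < α) {R R' : Set X} (h : R ⊆ R') :
    hausdorffMeasureC X cα α R ≤ hausdorffMeasureC X cα α R' := by
  rw [psi_eq hα, psi_eq hα]
  exact (OuterMeasure.mkMetric' _).mono h

lemma preCar_anti {𝒮 : Set (Set X)} {ζ : Set X → ℝ≥0∞} {δ δ' : ℝ≥0∞} (h : δ' ≤ δ)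
    (R : Set X) : preCarMeasure 𝒮 ζ δ R ≤ preCarMeasure 𝒮 ζ δ' R := by
  refine le_iInf fun E => le_iInf fun hE => le_iInf fun hd => le_iInf fun hcov => ?_
  exact iInf_le_of_le E (iInf_le_of_le hE
    (iInf_le_of_le (fun j => (hd j).trans h) (iInf_le_of_le hcov le_rfl)))

lemma preCar_le_psi {δ : ℝ≥0∞} (hδ : 0 < δ) (R : Set X) :
    preCarMeasure (closedSets X) (zetaDiam cα α) δ R ≤ hausdorffMeasureC X cα α R :=
  le_iSup₂_of_le δ hδ le_rfl

/-- Countable covers by closed sets of small diameter bound the pre-Carathéodory measure. -/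
lemma preCar_le_tsum (hα : 0 < α) {ι : Type*} [Countable ι] {δ : ℝ≥0∞} {R : Set X}
    (E : ι → Set X) (hE : ∀ i, IsClosed (E i)) (hd : ∀ i, EMetric.diam (E i) ≤ δ)
    (hcov : R ⊆ ⋃ i, E i) :
    preCarMeasure (closedSets X) (zetaDiam cα α) δ R ≤ ∑' i, zetaDiam cα α (E i) := by
  have h1 : preCarMeasure (closedSets X) (zetaDiam cα α) δ R =
      OuterMeasure.mkMetric'.pre (fun s : Set X => zetaDiam cα α s) δ R := preCar_eq hα δ R
  rw [h1]
  calc OuterMeasure.mkMetric'.pre (fun s : Set X => zetaDiam cα α s) δ R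
      ≤ OuterMeasure.mkMetric'.pre (fun s : Set X => zetaDiam cα α s) δ (⋃ i, E i) :=
        (OuterMeasure.mkMetric'.pre _ δ).mono hcov
    _ ≤ ∑' i, OuterMeasure.mkMetric'.pre (fun s : Set X => zetaDiam cα α s) δ (E i) :=
        measure_iUnion_le E
    _ ≤ ∑' i, zetaDiam cα α (E i) :=
        ENNReal.tsum_le_tsum fun i => OuterMeasure.mkMetric'.pre_le (hd i)

lemma preCar_union_le (hα : 0 < α) {δ : ℝ≥0∞} (R C : Set X) :
    preCarMeasure (closedSets X) (zetaDiam cα α) δ R ≤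
      preCarMeasure (closedSets X) (zetaDiam cα α) δ (R ∩ C) +
      preCarMeasure (closedSets X) (zetaDiam cα α) δ (R \ C) := by
  simp only [preCar_eq hα]
  calc OuterMeasure.mkMetric'.pre (fun s : Set X => zetaDiam cα α s) δ R
      ≤ OuterMeasure.mkMetric'.pre (fun s : Set X => zetaDiam cα α s) δ ((R ∩ C) ∪ (R \ C)) :=
        (OuterMeasure.mkMetric'.pre _ δ).mono (by rw [inter_union_diff])
    _ ≤ _ := measure_union_le _ _

end Infra

section L1

variable (μ : OuterMeasure X) {cα α : ℝ}

/-- Comparison lemma, easy direction: if the density is `< t` on `B` then `μ B ≤ t ψ B`. -/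
lemma mu_le_of_density_lt (hα : 0 < α) (hc : 0 < cα) (hreg : IsRegularOM μ)
    {B : Set X} {t : ℝ≥0∞} (httop : t ≠ ⊤)
    (hd : ∀ x ∈ B, federerDensity μ (closedSets X) (zetaDiam cα α) x < t) :
    μ B ≤ t * hausdorffMeasureC X cα α B := by
  rcases eq_or_ne t 0 with rfl | ht0
  · have : B = ∅ := eq_empty_iff_forall_notMem.2 fun x hx => by
      simpa using hd x hx
    simp [this]
  classical
  set ζ : Set X → ℝ≥0∞ := zetaDiam cα α with hζ
  set Bn : ℕ → Set X := fun n =>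
    {x ∈ B | ∀ S ∈ goodClass μ (closedSets X) ζ, x ∈ S →
      EMetric.diam S < ((n : ℝ≥0∞))⁻¹ → fedQuot μ ζ S < t} with hBn
  have hBnB : ∀ n, Bn n ⊆ B := fun n => sep_subset _ _
  have hBnmono : Monotone Bn := by
    intro n m hnm x hx
    refine ⟨hx.1, fun S hS hxS hdS => hx.2 S hS hxS (hdS.trans_le ?_)⟩
    exact ENNReal.inv_le_inv.2 (Nat.cast_le.2 hnm)
  have hBunion : (⋃ n, Bn n) = B := by
    refine subset_antisymm (iUnion_subset hBnB) fun x hx => ?_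
    obtain ⟨n, hn⟩ := exists_scale_of_density_lt μ cα α (hd x hx)
    exact mem_iUnion.2 ⟨n, hx, hn⟩
  have key : ∀ n, μ (Bn n) ≤ t * hausdorffMeasureC X cα α B := by
    intro n
    set δ' : ℝ≥0∞ := ((n + 1 : ℕ) : ℝ≥0∞)⁻¹ with hδ'
    have hδ'pos : 0 < δ' := ENNReal.inv_pos.2 (ENNReal.natCast_ne_top _)
    have hδ'top : δ' ≠ ⊤ := ENNReal.inv_ne_top.2 (by exact_mod_cast Nat.succ_ne_zero n)
    have hδ'lt : δ' < ((n : ℝ≥0∞))⁻¹ := by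
      rcases Nat.eq_zero_or_pos n with rfl | hn
      · simpa [hδ'] using hδ'top.lt_top
      · exact ENNReal.inv_lt_inv.2 (by exact_mod_cast lt_add_one n)
    have hstep : μ (Bn n) ≤ t * preCarMeasure (closedSets X) ζ δ' (Bn n) := by
      rw [mul_comm, ← ENNReal.div_le_iff_le_mul (Or.inl ht0) (Or.inl httop),
        preCarMeasure]
      refine le_iInf fun E => le_iInf fun hE => le_iInf fun hEd => le_iInf fun hER => ?_
      rw [ENNReal.div_le_iff_le_mul (Or.inl ht0) (Or.inl httop), mul_comm]
      set J := {j : ℕ | (E j ∩ Bn n).Nonempty} with hJ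
      have hcov' : Bn n ⊆ ⋃ j : J, E j := by
        intro x hx
        obtain ⟨j, hj⟩ := mem_iUnion.1 (hER hx)
        exact mem_iUnion.2 ⟨⟨j, ⟨x, hj, hx⟩⟩, hj⟩
      have hterm : ∀ j : J, μ (E j) ≤ t * ζ (E j) := by
        rintro ⟨j, hj⟩
        obtain ⟨x, hxE, hxBn⟩ := hj
        have hclosed : IsClosed (E j) := hE j
        have hdlt : EMetric.diam (E j) < ((n : ℝ≥0∞))⁻¹ := (hEd j).trans_lt hδ'lt
        have hdfin : EMetric.diam (E j) ≠ ⊤ := ((hEd j).trans_lt hδ'top.lt_top).ne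
        have hζfin : ζ (E j) ≠ ⊤ := zeta_ne_top hα hc hdfin
        by_cases hζ0 : ζ (E j) = 0
        · by_cases hμ0 : μ (E j) = 0
          · simp [hμ0]
          · have hmem : E j ∈ goodClass μ (closedSets X) ζ := by
              refine ⟨hclosed, ?_⟩
              rintro (⟨-, h⟩ | ⟨h, -⟩)
              · exact hμ0 h
              · rw [hζ0] at h; exact ENNReal.zero_ne_top h
            have := hxBn.2 (E j) hmem hxE hdlt
            rw [fedQuot, if_pos hζ0] at this
            exact absurd this not_top_lt
        · have hmem : E j ∈ goodClass μ (closedSets X) ζ :=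
            mem_goodClass (cα := cα) (α := α) μ hclosed hζ0 hζfin
          have hQ := hxBn.2 (E j) hmem hxE hdlt
          rw [fedQuot, if_neg hζ0] at hQ
          exact ((ENNReal.div_lt_iff (Or.inl hζ0) (Or.inl hζfin)).1 hQ).le
      calc μ (Bn n) ≤ μ (⋃ j : J, E j) := μ.mono hcov'
        _ ≤ ∑' j : J, μ (E j) := measure_iUnion_le _
        _ ≤ ∑' j : J, t * ζ (E j) := ENNReal.tsum_le_tsum hterm
        _ = t * ∑' j : J, ζ (E j) := ENNReal.tsum_mul_left
        _ ≤ t * ∑' j : ℕ, ζ (E j) := by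
            refine mul_le_mul_right ?_ t
            exact ENNReal.summable.tsum_le_tsum_of_inj (Subtype.val : J → ℕ) Subtype.coe_injective
              (fun c _ => zero_le) (fun j => le_rfl) ENNReal.summable
    refine hstep.trans (mul_le_mul_right ?_ t)
    exact (preCar_le_psi hδ'pos _).trans (psi_mono hα (hBnB n))
  calc μ B = μ (⋃ n, Bn n) := by rw [hBunion]
    _ = ⨆ n, μ (Bn n) := regular_iUnion_of_monotone μ hreg hBnmono
    _ ≤ t * hausdorffMeasureC X cα α B := iSup_le key

end L1
section OuterReg

variable (μ : OuterMeasure X)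

lemma exists_open_of_subset_open (hB : IsBorelOM μ) {U B : Set X} (hUo : IsOpen U)
    (hUfin : μ U ≠ ⊤) (hBU : B ⊆ U) (hBm : MeasurableSet[borel X] B)
    {ε : ℝ≥0∞} (hε : 0 < ε) :
    ∃ V : Set X, IsOpen V ∧ B ⊆ V ∧ V ⊆ U ∧ μ V ≤ μ B + ε := by
  letI : MeasurableSpace X := borel X
  haveI : BorelSpace X := ⟨rfl⟩
  set ν : Measure X := μ.toMeasure (borelOM_le_caratheodory μ hB) with hνdef
  have hν : ∀ s : Set X, MeasurableSet s → ν s = μ s := fun s hs =>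
    toMeasure_apply μ _ hs
  set ρ : Measure X := ν.restrict U with hρdef
  haveI : IsFiniteMeasure ρ := ⟨by
    rw [hρdef, Measure.restrict_apply_univ, hν U hUo.measurableSet]
    exact hUfin.lt_top⟩
  have hμBfin : μ B ≠ ⊤ := ((μ.mono hBU).trans_lt hUfin.lt_top).ne
  have hρB : ρ B = μ B := by
    rw [hρdef, Measure.restrict_apply hBm, inter_eq_self_of_subset_left hBU, hν B hBm]
  obtain ⟨W, hBW, hWo, hWlt⟩ := B.exists_isOpen_lt_of_lt (μ B + ε)
    (by rw [hρB]; exact ENNReal.lt_add_right hμBfin hε.ne')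
  refine ⟨W ∩ U, hWo.inter hUo, subset_inter hBW hBU, inter_subset_right, ?_⟩
  have h1 : μ (W ∩ U) = ν (W ∩ U) := (hν _ (hWo.inter hUo).measurableSet).symm
  have h2 : ν (W ∩ U) = ρ W := by rw [hρdef, Measure.restrict_apply hWo.measurableSet]
  rw [h1, h2]
  exact hWlt.le

lemma exists_open_approx (hB : IsBorelOM μ) {A B : Set X}
    (h4 : ∃ U : ℕ → Set X, A ⊆ ⋃ j, U j ∧ ∀ j, IsOpen (U j) ∧ μ (U j) < ⊤)
    (hBA : B ⊆ A) (hBm : MeasurableSet[borel X] B) {ε : ℝ≥0∞} (hε : ε ≠ 0) :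
    ∃ V : Set X, IsOpen V ∧ B ⊆ V ∧ μ V ≤ μ B + ε := by
  classical
  letI : MeasurableSpace X := borel X
  haveI : BorelSpace X := ⟨rfl⟩
  obtain ⟨U, hAU, hU⟩ := h4
  obtain ⟨δ, hδpos, hδsum⟩ := ENNReal.exists_pos_sum_of_countable hε ℕ
  set ν : Measure X := μ.toMeasure (borelOM_le_caratheodory μ hB) with hνdef
  have hν : ∀ s : Set X, MeasurableSet s → ν s = μ s := fun s hs =>
    toMeasure_apply μ _ hs
  set D : ℕ → Set X := fun j => B ∩ disjointed U j with hD
  have hDm : ∀ j, MeasurableSet (D j) := fun j =>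
    hBm.inter (MeasurableSet.disjointed (fun i => (hU i).1.measurableSet) j)
  have hDdisj : Pairwise (Function.onFun Disjoint D) := fun i j hij =>
    (disjoint_disjointed U hij).mono inter_subset_right inter_subset_right
  have hDB : (⋃ j, D j) = B := by
    rw [hD, ← inter_iUnion, iUnion_disjointed]
    exact inter_eq_self_of_subset_left (hBA.trans hAU)
  have hDU : ∀ j, D j ⊆ U j := fun j =>
    inter_subset_right.trans (disjointed_subset U j)
  have hDchoice : ∀ j : ℕ, ∃ V : Set X, IsOpen V ∧ D j ⊆ V ∧ V ⊆ U j ∧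
      μ V ≤ μ (D j) + δ j := fun j =>
    exists_open_of_subset_open μ hB (hU j).1 (hU j).2.ne (hDU j) (hDm j)
      (ENNReal.coe_pos.2 (hδpos j))
  choose V hVo hDV hVU hVμ using hDchoice
  refine ⟨⋃ j, V j, isOpen_iUnion hVo, ?_, ?_⟩
  · rw [← hDB]
    exact iUnion_mono hDV
  · have hDsum : ∑' j, μ (D j) = μ B := by
      have h1 : ∀ j, μ (D j) = ν (D j) := fun j => (hν _ (hDm j)).symm
      simp_rw [h1]
      rw [← measure_iUnion hDdisj hDm, hDB, hν B hBm]
    calc μ (⋃ j, V j) ≤ ∑' j, μ (V j) := measure_iUnion_le V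
      _ ≤ ∑' j, (μ (D j) + δ j) := ENNReal.tsum_le_tsum hVμ
      _ = ∑' j, μ (D j) + ∑' j, (δ j : ℝ≥0∞) := ENNReal.tsum_add
      _ ≤ μ B + ε := by rw [hDsum]; exact add_le_add le_rfl hδsum.le

end OuterReg
section L2

variable (μ : OuterMeasure X) {cα α : ℝ}

/-- Comparison lemma, Vitali direction: if the density is `> t` on `B ⊆ V` open,
then `t ψ B ≤ μ V`. -/
lemma t_psi_le_of_lt_density (hα : 0 < α) (hc : 0 < cα) (hBor : IsBorelOM μ)
    {B : Set X} {t : ℝ≥0∞} (ht0 : t ≠ 0) (httop : t ≠ ⊤)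
    (hd : ∀ x ∈ B, t < federerDensity μ (closedSets X) (zetaDiam cα α) x)
    {V : Set X} (hVo : IsOpen V) (hBV : B ⊆ V) :
    t * hausdorffMeasureC X cα α B ≤ μ V := by
  classical
  by_cases hμV : μ V = ⊤
  · rw [hμV]; exact le_top
  letI : MeasurableSpace X := borel X
  haveI : BorelSpace X := ⟨rfl⟩
  set ν : Measure X := μ.toMeasure (borelOM_le_caratheodory μ hBor) with hνdef
  have hν : ∀ s : Set X, MeasurableSet s → ν s = μ s := fun s hs =>
    toMeasure_apply μ _ hs
  suffices h : hausdorffMeasureC X cα α B ≤ μ V / t by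
    exact (mul_le_mul_right h t).trans ENNReal.mul_div_le
  refine ENNReal.le_of_forall_pos_le_add fun ε hε hfin => ?_
  rw [hausdorffMeasureC, carMeasure]
  refine iSup₂_le fun δ hδ => ?_
  obtain ⟨r, hr0, hrδ⟩ : ∃ r : ℝ, 0 < r ∧ ENNReal.ofReal r ≤ δ := by
    rcases eq_or_ne δ ⊤ with rfl | hne
    · exact ⟨1, one_pos, le_top⟩
    · exact ⟨δ.toReal, ENNReal.toReal_pos hδ.ne' hne,
        (ENNReal.ofReal_toReal hne).le⟩
  refine le_trans (preCar_anti hrδ B) ?_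
  -- the fine family
  set 𝒯 : Set (Set X) := {S | S ∈ goodClass μ (closedSets X) (zetaDiam cα α) ∧ S ⊆ V ∧
    (S ∩ B).Nonempty ∧ t * zetaDiam cα α S ≤ μ S ∧
    EMetric.diam S ≤ ENNReal.ofReal (r / 9)} with h𝒯
  have hr9 : (0:ℝ) < r / 9 := by linarith
  have hfine : ∀ x ∈ B, ∀ ρ : ℝ≥0∞, 0 < ρ → ∃ S ∈ 𝒯, x ∈ S ∧ EMetric.diam S < ρ := by
    intro x hx ρ hρ
    obtain ⟨rad, hrad, hball⟩ := EMetric.isOpen_iff.1 hVo x (hBV hx)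
    have hρ' : 0 < min (min ρ rad) (ENNReal.ofReal (r / 9)) :=
      lt_min (lt_min hρ hrad) (ENNReal.ofReal_pos.2 hr9)
    obtain ⟨S, hSG, hxS, hSd, hSQ⟩ := exists_of_lt_density μ cα α (hd x hx) hρ'
    have hd1 : EMetric.diam S < ρ := hSd.trans_le ((min_le_left _ _).trans (min_le_left _ _))
    have hd2 : EMetric.diam S < rad :=
      hSd.trans_le ((min_le_left _ _).trans (min_le_right _ _))
    have hd3 : EMetric.diam S ≤ ENNReal.ofReal (r / 9) := (hSd.trans_le (min_le_right _ _)).le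
    have hSV : S ⊆ V := fun y hy => hball
      (EMetric.mem_ball.2 ((EMetric.edist_le_diam_of_mem hy hxS).trans_lt hd2))
    have hQ : t * zetaDiam cα α S ≤ μ S := by
      by_cases hζ0 : zetaDiam cα α S = 0
      · simp [hζ0]
      · have hζfin : zetaDiam cα α S ≠ ⊤ :=
          zeta_ne_top hα hc (hd3.trans_lt ENNReal.ofReal_lt_top).ne
        rw [fedQuot, if_neg hζ0] at hSQ
        exact ((ENNReal.lt_div_iff_mul_lt (Or.inl hζ0) (Or.inl hζfin)).1 hSQ).le
    exact ⟨S, ⟨hSG, hSV, ⟨x, hxS, hx⟩, hQ, hd3⟩, hxS, hd1⟩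
  have h𝒯ne : ∀ S ∈ 𝒯, S.Nonempty := fun S hS => hS.2.2.1.mono inter_subset_left |>.mono subset_rfl
  have h𝒯closed : ∀ S ∈ 𝒯, IsClosed S := fun S hS => hS.1.1
  have h𝒯pos : ∀ S ∈ 𝒯, μ S ≠ 0 := by
    intro S hS
    by_cases hζ0 : zetaDiam cα α S = 0
    · exact fun hμ0 => hS.1.2 (Or.inl ⟨hζ0, hμ0⟩)
    · intro hμ0
      have := hS.2.2.2.1
      rw [hμ0, nonpos_iff_eq_zero, mul_eq_zero] at this
      rcases this with h | h
      · exact ht0 h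
      · exact hζ0 h
  have h𝒯dfin : ∀ S ∈ 𝒯, EMetric.diam S ≠ ⊤ := fun S hS =>
    (hS.2.2.2.2.trans_lt ENNReal.ofReal_lt_top).ne
  -- Vitali covering lemma
  obtain ⟨u, hu𝒯, hudisj, hucov⟩ :=
    Vitali.exists_disjoint_subfamily_covering_enlargement (id : Set X → Set X) 𝒯
      (fun S => (EMetric.diam S).toReal) 2 one_lt_two
      (fun S _ => ENNReal.toReal_nonneg) (r / 9)
      (fun S hS => ENNReal.toReal_le_of_le_ofReal hr9.le hS.2.2.2.2)
      h𝒯ne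
  -- countability of `u`
  have hcount : u.Countable := by
    have hmeas : ∀ W : ↥u, MeasurableSet (W : Set X) := fun W =>
      (h𝒯closed _ (hu𝒯 W.2)).measurableSet
    have hdisj : Pairwise (Function.onFun Disjoint fun W : ↥u => (W : Set X)) := fun i j hij =>
      hudisj i.2 j.2 (Subtype.coe_injective.ne hij)
    have hfinU : ν (⋃ W : ↥u, (W : Set X)) ≠ ⊤ := by
      refine ne_top_of_le_ne_top ?_ (measure_mono (iUnion_subset fun W => (hu𝒯 W.2).2.1))
      rw [hν V hVo.measurableSet]
      exact hμV
    have := MeasureTheory.Measure.countable_meas_pos_of_disjoint_of_meas_iUnion_ne_top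
      (ι := ↥u) ν hmeas hdisj hfinU
    have huniv : {i : ↥u | 0 < ν (i : Set X)} = univ := by
      refine eq_univ_of_forall fun W => ?_
      have := h𝒯pos _ (hu𝒯 W.2)
      rw [mem_setOf_eq, hν _ (hmeas W)]
      exact pos_iff_ne_zero.2 this
    rw [huniv] at this
    have : Countable ↥u := countable_univ_iff.1 this
    exact countable_coe_iff.1 this
  haveI : Countable ↥u := hcount.to_subtype
  -- the ζ-sum over `u` is controlled
  have hμsum : ∑' W : ↥u, μ (W : Set X) ≤ μ V := by
    have h1 : ∀ W : ↥u, μ (W : Set X) = ν (W : Set X) := fun W =>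
      (hν _ (h𝒯closed _ (hu𝒯 W.2)).measurableSet).symm
    simp_rw [h1]
    have h2 : ν (⋃₀ u) = ∑' W : ↥u, ν (W : Set X) := by
      refine measure_sUnion hcount (fun s hs t ht hst => hudisj hs ht hst) ?_
      exact fun s hs => (h𝒯closed _ (hu𝒯 hs)).measurableSet
    rw [← h2, ← hν V hVo.measurableSet]
    exact measure_mono (sUnion_subset fun W hW => (hu𝒯 hW).2.1)
  have hζsum : ∑' W : ↥u, zetaDiam cα α (W : Set X) ≤ μ V / t := by
    rw [ENNReal.le_div_iff_mul_le (Or.inl ht0) (Or.inl httop)]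
    calc (∑' W : ↥u, zetaDiam cα α (W : Set X)) * t
        = ∑' W : ↥u, zetaDiam cα α (W : Set X) * t := ENNReal.tsum_mul_right.symm
      _ ≤ ∑' W : ↥u, μ (W : Set X) := by
          refine ENNReal.tsum_le_tsum fun W => ?_
          rw [mul_comm]
          exact (hu𝒯 W.2).2.2.2.1
      _ ≤ μ V := hμsum
  have hζfin' : ∑' W : ↥u, zetaDiam cα α (W : Set X) ≠ ⊤ :=
    (hζsum.trans_lt hfin).ne
  -- enlargement constants
  set κ : ℝ≥0∞ := (5 : ℝ≥0∞) ^ α with hκ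
  have hκ0 : κ ≠ 0 := by
    rw [hκ]
    simp [ENNReal.rpow_eq_zero_iff, hα.not_gt, hα.ne']
  have hκtop : κ ≠ ⊤ := by
    rw [hκ]
    exact ENNReal.rpow_ne_top_of_nonneg hα.le (by norm_num)
  -- enlargement of a member of `u`
  set Enl : Set X → Set X := fun W => Metric.cthickening (2 * Metric.diam W) W with hEnl
  have hEnl_closed : ∀ W, IsClosed (Enl W) := fun W => Metric.isClosed_cthickening
  have hEnl_diam : ∀ W ∈ u, EMetric.diam (Enl W) ≤ 5 * EMetric.diam W := by
    intro W hW
    have hWfin : EMetric.diam W ≠ ⊤ := h𝒯dfin _ (hu𝒯 hW)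
    have h2d : (0:ℝ) ≤ 2 * Metric.diam W := by positivity
    have hthick := Metric.ediam_cthickening_le (s := W) (2 * Metric.diam W).toNNReal
    rw [Real.coe_toNNReal _ h2d] at hthick
    calc EMetric.diam (Enl W)
        ≤ EMetric.diam W + 2 * ENNReal.ofReal (2 * Metric.diam W) := hthick
      _ = EMetric.diam W + 2 * (2 * EMetric.diam W) := by
          rw [ENNReal.ofReal_mul (by norm_num), Metric.diam,
            ENNReal.ofReal_toReal (show Metric.ediam W ≠ ⊤ from hWfin), ENNReal.ofReal_ofNat,
            EMetric.diam]
      _ = 5 * EMetric.diam W := by ring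
  have hEnl_zeta : ∀ W ∈ u, zetaDiam cα α (Enl W) ≤ κ * zetaDiam cα α W := by
    intro W hW
    rw [zetaDiam, zetaDiam, hκ]
    calc ENNReal.ofReal cα * EMetric.diam (Enl W) ^ α
        ≤ ENNReal.ofReal cα * (5 * EMetric.diam W) ^ α := by
          exact mul_le_mul_right (ENNReal.rpow_le_rpow (hEnl_diam W hW) hα.le) _
      _ = (5:ℝ≥0∞) ^ α * (ENNReal.ofReal cα * EMetric.diam W ^ α) := by
          rw [ENNReal.mul_rpow_of_nonneg _ _ hα.le]; ring
  have hEnl_diam_r : ∀ W ∈ u, EMetric.diam (Enl W) ≤ ENNReal.ofReal r := by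
    intro W hW
    refine (hEnl_diam W hW).trans ?_
    calc (5:ℝ≥0∞) * EMetric.diam W ≤ (5:ℝ≥0∞) * ENNReal.ofReal (r / 9) :=
          mul_le_mul_right (hu𝒯 hW).2.2.2.2 _
      _ = ENNReal.ofReal (5 * (r / 9)) := by
          rw [ENNReal.ofReal_mul (by norm_num), ENNReal.ofReal_ofNat]
      _ ≤ ENNReal.ofReal r := ENNReal.ofReal_le_ofReal (by linarith)
  -- tail selection
  obtain ⟨v, hv⟩ : ∃ v : Finset ↥u,
      (∑' W : {W : ↥u // W ∉ v}, zetaDiam cα α ((W : ↥u) : Set X)) < (ε : ℝ≥0∞) / κ := by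
    have htends := ENNReal.tendsto_tsum_compl_atTop_zero
      (f := fun W : ↥u => zetaDiam cα α (W : Set X)) hζfin'
    have hpos : (0:ℝ≥0∞) < (ε : ℝ≥0∞) / κ := by
      rw [pos_iff_ne_zero, Ne, ENNReal.div_eq_zero_iff]
      push_neg
      exact ⟨ENNReal.coe_ne_zero.2 hε.ne', hκtop⟩
    exact (htends.eventually (gt_mem_nhds hpos)).exists
  -- the finite closed part
  set C : Set X := ⋃ (W : ↥u) (_ : W ∈ v), (W : Set X) with hC
  have hCclosed : IsClosed C :=
    Set.Finite.isClosed_biUnion v.finite_toSet fun W _ => h𝒯closed _ (hu𝒯 W.2)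
  -- covering of `B \ C` by enlargements
  have hBC : B \ C ⊆ ⋃ W : {W : ↥u // W ∉ v}, Enl ((W : ↥u) : Set X) := by
    rintro x ⟨hxB, hxC⟩
    obtain ⟨ρ, hρ0, hρball⟩ := EMetric.isOpen_iff.1 hCclosed.isOpen_compl x hxC
    obtain ⟨S, hS𝒯, hxS, hSd⟩ := hfine x hxB ρ hρ0
    have hSC : ∀ y ∈ S, y ∉ C := fun y hy => hρball
      (EMetric.mem_ball.2 ((EMetric.edist_le_diam_of_mem hy hxS).trans_lt hSd))
    obtain ⟨W, hWu, hSW, hdSW⟩ := hucov S hS𝒯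
    obtain ⟨z, hzS, hzW⟩ := hSW
    have hWnv : (⟨W, hWu⟩ : ↥u) ∉ v := by
      intro hmem
      exact hSC z hzS (mem_iUnion₂.2 ⟨⟨W, hWu⟩, hmem, hzW⟩)
    refine mem_iUnion.2 ⟨⟨⟨W, hWu⟩, hWnv⟩, ?_⟩
    rw [hEnl]
    rw [Metric.mem_cthickening_iff]
    calc EMetric.infEdist x W ≤ edist x z := EMetric.infEdist_le_edist_of_mem hzW
      _ ≤ EMetric.diam S := EMetric.edist_le_diam_of_mem hxS hzS
      _ = ENNReal.ofReal (EMetric.diam S).toReal :=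
          (ENNReal.ofReal_toReal (h𝒯dfin S hS𝒯)).symm
      _ ≤ ENNReal.ofReal (2 * Metric.diam W) := ENNReal.ofReal_le_ofReal (by
          simpa [Metric.diam, EMetric.diam] using hdSW)
  -- final cover bound
  have hpiece1 : preCarMeasure (closedSets X) (zetaDiam cα α) (ENNReal.ofReal r) (B ∩ C)
      ≤ ∑' W : ↥u, zetaDiam cα α (W : Set X) := by
    refine (preCar_le_tsum hα (ι := {W : ↥u // W ∈ v})
      (fun W => ((W : ↥u) : Set X)) (fun W => h𝒯closed _ (hu𝒯 (W : ↥u).2))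
      (fun W => ((hu𝒯 (W : ↥u).2).2.2.2.2.trans (ENNReal.ofReal_le_ofReal (by linarith))))
      ?_).trans ?_
    · intro x hx
      obtain ⟨W, hWv, hxW⟩ := mem_iUnion₂.1 hx.2
      exact mem_iUnion.2 ⟨⟨W, hWv⟩, hxW⟩
    · exact ENNReal.summable.tsum_le_tsum_of_inj (fun W : {W : ↥u // W ∈ v} => (W : ↥u))
        Subtype.coe_injective (fun c _ => zero_le) (fun W => le_rfl)
        ENNReal.summable
  have hpiece2 : preCarMeasure (closedSets X) (zetaDiam cα α) (ENNReal.ofReal r) (B \ C)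
      ≤ (ε : ℝ≥0∞) := by
    refine (preCar_le_tsum hα (ι := {W : ↥u // W ∉ v})
      (fun W => Enl ((W : ↥u) : Set X)) (fun W => hEnl_closed _)
      (fun W => hEnl_diam_r _ (W : ↥u).2) hBC).trans ?_
    calc (∑' W : {W : ↥u // W ∉ v}, zetaDiam cα α (Enl ((W : ↥u) : Set X)))
        ≤ ∑' W : {W : ↥u // W ∉ v}, κ * zetaDiam cα α ((W : ↥u) : Set X) :=
          ENNReal.tsum_le_tsum fun W => hEnl_zeta _ (W : ↥u).2
      _ = κ * ∑' W : {W : ↥u // W ∉ v}, zetaDiam cα α ((W : ↥u) : Set X) :=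
          ENNReal.tsum_mul_left
      _ ≤ κ * ((ε : ℝ≥0∞) / κ) := mul_le_mul_right hv.le _
      _ ≤ (ε : ℝ≥0∞) := ENNReal.mul_div_le
  calc preCarMeasure (closedSets X) (zetaDiam cα α) (ENNReal.ofReal r) B
      ≤ preCarMeasure (closedSets X) (zetaDiam cα α) (ENNReal.ofReal r) (B ∩ C) +
        preCarMeasure (closedSets X) (zetaDiam cα α) (ENNReal.ofReal r) (B \ C) :=
        preCar_union_le hα B C
    _ ≤ μ V / t + (ε : ℝ≥0∞) := add_le_add (hpiece1.trans hζsum) hpiece2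

end L2
section Assembly

lemma mul_le_of_forall_lt {c y z : ℝ≥0∞} (hc : c ≠ ⊤) (h : ∀ t < c, t * y ≤ z) :
    c * y ≤ z := by
  refine ENNReal.le_of_forall_lt_one_mul_le fun a ha => ?_
  rcases eq_or_ne c 0 with rfl | hc0
  · simpa using zero_le
  have hac : a * c < c := by
    calc a * c < 1 * c := ENNReal.mul_lt_mul_left hc0 hc ha
    _ = c := one_mul c
  calc a * (c * y) = a * c * y := (mul_assoc _ _ _).symm
  _ ≤ z := h _ hac

lemma le_of_forall_ofReal_mul {a b : ℝ≥0∞}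
    (h : ∀ s : ℝ, 1 < s → a ≤ ENNReal.ofReal s * b) : a ≤ b := by
  rcases eq_or_ne b ⊤ with rfl | hb
  · exact le_top
  rcases eq_or_ne b 0 with rfl | hb0
  · simpa using h 2 one_lt_two
  refine ENNReal.le_of_forall_pos_le_add fun ε hε hblt => ?_
  obtain ⟨n, hn⟩ := ENNReal.exists_inv_nat_lt (a := (ε : ℝ≥0∞) / b) (by
    simp [ENNReal.div_eq_zero_iff, hb, hε.ne'])
  have hpos : (0:ℝ) < ((n:ℝ)+1)⁻¹ := by positivity
  have hs : (1:ℝ) < 1 + ((n:ℝ)+1)⁻¹ := by linarith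
  refine (h _ hs).trans ?_
  have hof : ENNReal.ofReal (1 + ((n:ℝ)+1)⁻¹) = 1 + (((n:ℕ):ℝ≥0∞)+1)⁻¹ := by
    rw [ENNReal.ofReal_add zero_le_one hpos.le, ENNReal.ofReal_one,
      ENNReal.ofReal_inv_of_pos (by positivity), ENNReal.ofReal_add (by positivity) zero_le_one,
      ENNReal.ofReal_natCast, ENNReal.ofReal_one]
  rw [hof, add_mul, one_mul]
  refine add_le_add le_rfl ?_
  have h1 : ((((n:ℕ):ℝ≥0∞))+1)⁻¹ ≤ ((n:ℕ):ℝ≥0∞)⁻¹ :=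
    ENNReal.inv_le_inv.2 (le_add_of_nonneg_right (zero_le))
  calc (((n:ℕ):ℝ≥0∞)+1)⁻¹ * b ≤ ((ε:ℝ≥0∞)/b) * b :=
      mul_le_mul_left (h1.trans hn.le) b
  _ ≤ ε := by rw [mul_comm]; exact ENNReal.mul_div_le

variable (μ : OuterMeasure X) {cα α : ℝ}

/-- The part of `A` where the density vanishes is `μ`-null (using σ-finiteness wrt `ℋ^α`). -/
lemma mu_zero_of_density_zero (hα : 0 < α) (hc : 0 < cα) (hreg : IsRegularOM μ)
    {A Z : Set X}
    (h5 : SigmaFiniteWrt (hausdorffMeasureC X cα α)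
      {x ∈ A | federerDensity μ (closedSets X) (zetaDiam cα α) x = 0})
    (hZ : Z ⊆ {x ∈ A | federerDensity μ (closedSets X) (zetaDiam cα α) x = 0}) :
    μ Z = 0 := by
  obtain ⟨E, hcov, hfin⟩ := h5
  have key : ∀ j, μ (Z ∩ E j) = 0 := by
    intro j
    have hb : ∀ n : ℕ, μ (Z ∩ E j) ≤
        ((n:ℝ≥0∞)+1)⁻¹ * hausdorffMeasureC X cα α (E j) := by
      intro n
      have hd : ∀ x ∈ Z ∩ E j,
          federerDensity μ (closedSets X) (zetaDiam cα α) x < ((n:ℝ≥0∞)+1)⁻¹ := by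
        intro x hx
        rw [(hZ hx.1).2]
        exact ENNReal.inv_pos.2 (by simp)
      have := mu_le_of_density_lt μ hα hc hreg
        (t := ((n:ℝ≥0∞)+1)⁻¹) (ENNReal.inv_ne_top.2 (by simp)) hd
      exact this.trans (mul_le_mul_right (psi_mono hα inter_subset_right) _)
    refine le_antisymm ?_ (zero_le)
    refine ENNReal.le_of_forall_pos_le_add fun ε hε _ => ?_
    rw [zero_add]
    rcases eq_or_ne (hausdorffMeasureC X cα α (E j)) 0 with h0 | h0
    · refine (hb 0).trans ?_
      rw [h0, mul_zero]
      exact zero_le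
    obtain ⟨n, hn⟩ := ENNReal.exists_inv_nat_lt
      (a := (ε:ℝ≥0∞) / hausdorffMeasureC X cα α (E j))
      (by simp [ENNReal.div_eq_zero_iff, hε.ne', (hfin j).ne])
    refine (hb n).trans ?_
    have h1 : ((n:ℝ≥0∞)+1)⁻¹ ≤ ((n:ℝ≥0∞))⁻¹ :=
      ENNReal.inv_le_inv.2 (le_add_of_nonneg_right (zero_le))
    calc ((n:ℝ≥0∞)+1)⁻¹ * hausdorffMeasureC X cα α (E j)
        ≤ ((ε:ℝ≥0∞) / hausdorffMeasureC X cα α (E j)) * hausdorffMeasureC X cα α (E j) :=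
          mul_le_mul_left (h1.trans hn.le) _
      _ ≤ ε := by rw [mul_comm]; exact ENNReal.mul_div_le
  have hsub : Z ⊆ ⋃ j, Z ∩ E j := by
    intro x hx
    obtain ⟨j, hj⟩ := mem_iUnion.1 (hcov (hZ hx))
    exact mem_iUnion.2 ⟨j, hx, hj⟩
  refine le_antisymm ?_ (zero_le)
  calc μ Z ≤ μ (⋃ j, Z ∩ E j) := μ.mono hsub
    _ ≤ ∑' j, μ (Z ∩ E j) := measure_iUnion_le _
    _ = 0 := by simp [key]

/-- The part of `A` where the density is infinite is `ℋ^α`-null. -/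
lemma psi_zero_of_density_top (hα : 0 < α) (hc : 0 < cα) (hBor : IsBorelOM μ)
    {A Z : Set X}
    (h4 : ∃ U : ℕ → Set X, A ⊆ ⋃ j, U j ∧ ∀ j, IsOpen (U j) ∧ μ (U j) < ⊤)
    (hZA : Z ⊆ A)
    (hd : ∀ x ∈ Z, federerDensity μ (closedSets X) (zetaDiam cα α) x = ⊤) :
    hausdorffMeasureC X cα α Z = 0 := by
  obtain ⟨U, hAU, hU⟩ := h4
  have key : ∀ j, hausdorffMeasureC X cα α (Z ∩ U j) = 0 := by
    intro j
    by_contra h0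
    have hb : ∀ n : ℕ, (n:ℝ≥0∞) * hausdorffMeasureC X cα α (Z ∩ U j) ≤ μ (U j) := by
      intro n
      rcases eq_or_ne ((n:ℕ):ℝ≥0∞) 0 with h | h
      · rw [h, zero_mul]; exact zero_le
      refine t_psi_le_of_lt_density μ hα hc hBor h (ENNReal.natCast_ne_top n) ?_
        (hU j).1 inter_subset_right
      intro x hx
      rw [hd x hx.1]
      exact (ENNReal.natCast_ne_top n).lt_top
    obtain ⟨n, hn⟩ := ENNReal.exists_nat_gt
      (ENNReal.div_lt_top (hU j).2.ne h0).ne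
    have hcontra : μ (U j) < (n:ℝ≥0∞) * hausdorffMeasureC X cα α (Z ∩ U j) := by
      rw [← ENNReal.div_lt_iff (Or.inl h0) (Or.inr (hU j).2.ne)]
      exact hn
    exact (hcontra.not_ge (hb n)).elim
  have hsub : Z ⊆ ⋃ j, Z ∩ U j := by
    intro x hx
    obtain ⟨j, hj⟩ := mem_iUnion.1 (hAU (hZA hx))
    exact mem_iUnion.2 ⟨j, hx, hj⟩
  refine le_antisymm ?_ (zero_le)
  calc hausdorffMeasureC X cα α Z
      ≤ hausdorffMeasureC X cα α (⋃ j, Z ∩ U j) := psi_mono hα hsub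
    _ ≤ ∑' j, hausdorffMeasureC X cα α (Z ∩ U j) := by
        simp only [psi_eq hα]
        exact measure_iUnion_le _
    _ = 0 := by simp [key]

/-- Lower comparison on Borel sets, via outer regularity. -/
lemma t_psi_le_mu (hα : 0 < α) (hc : 0 < cα) (hBor : IsBorelOM μ) {A B : Set X}
    (h4 : ∃ U : ℕ → Set X, A ⊆ ⋃ j, U j ∧ ∀ j, IsOpen (U j) ∧ μ (U j) < ⊤)
    (hBA : B ⊆ A) (hBm : MeasurableSet[borel X] B) {t : ℝ≥0∞} (ht : t ≠ ⊤)
    (hd : ∀ x ∈ B, t ≤ federerDensity μ (closedSets X) (zetaDiam cα α) x) :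
    t * hausdorffMeasureC X cα α B ≤ μ B := by
  refine mul_le_of_forall_lt ht fun t' ht' => ?_
  rcases eq_or_ne t' 0 with rfl | ht'0
  · rw [zero_mul]; exact zero_le
  have ht'top : t' ≠ ⊤ := (ht'.trans_le le_top).trans_le (le_of_eq rfl) |>.ne
  refine ENNReal.le_of_forall_pos_le_add fun ε hε hlt => ?_
  obtain ⟨V, hVo, hBV, hVμ⟩ := exists_open_approx μ hBor h4 hBA hBm
    (ε := ε) (ENNReal.coe_ne_zero.2 hε.ne')
  refine le_trans (t_psi_le_of_lt_density μ hα hc hBor ht'0 ht'top ?_ hVo hBV) hVμ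
  exact fun x hx => ht'.trans_le (hd x hx)

end Assembly
end Stmt7Aux
/-- Area formula for the Hausdorff measure I. -/
theorem stmt7 {X : Type*} [MetricSpace X] (μ : MeasureTheory.OuterMeasure X)
    (α cα : ℝ) (hα : 0 < α) (hc : 0 < cα) (A : Set X)
    (h1 : IsRegularOM μ ∧ IsBorelOM μ)
    (h2 : CoversFinely (goodClass μ (closedSets X) (zetaDiam cα α)) A)
    (h3 : MeasurableSet[borel X] A)
    (h4 : ∃ U : ℕ → Set X, A ⊆ ⋃ j, U j ∧ ∀ j, IsOpen (U j) ∧ μ (U j) < ⊤)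
    (h5 : SigmaFiniteWrt (hausdorffMeasureC X cα α)
      {x ∈ A | federerDensity μ (closedSets X) (zetaDiam cα α) x = 0})
    (h6 : AbsContOn μ (hausdorffMeasureC X cα α) A) :
    (@Measurable A ℝ≥0∞ (borel A) ENNReal.measurableSpace
      (fun x : A => federerDensity μ (closedSets X) (zetaDiam cα α) (x : X))) ∧
    ∀ B ⊆ A, MeasurableSet[borel X] B →
      μ B = omIntegral (hausdorffMeasureC X cα α) B
        (federerDensity μ (closedSets X) (zetaDiam cα α)) := by
  classical
  obtain ⟨hreg, hBor⟩ := h1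
  letI : MeasurableSpace X := borel X
  haveI : BorelSpace X := ⟨rfl⟩
  have hdmeas : Measurable (federerDensity μ (closedSets X) (zetaDiam cα α)) :=
    Stmt7Aux.density_measurable μ hα hc
  constructor
  · -- Borel measurability of the density on `A`
    have hbs : BorelSpace ↥A := Subtype.borelSpace A
    have heq : (borel ↥A) = (inferInstance : MeasurableSpace ↥A) := hbs.measurable_eq.symm
    rw [heq]
    exact hdmeas.comp measurable_subtype_coe
  · intro B hBA hBm
    set Ψ : Measure X := (OuterMeasure.mkMetric'
        (fun s : Set X => zetaDiam cα α s)).toMeasure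
      ((OuterMeasure.mkMetric'_isMetric _).borel_le_caratheodory) with hΨdef
    have hΨ : ∀ s : Set X, MeasurableSet s → Ψ s = hausdorffMeasureC X cα α s := by
      intro s hs
      rw [hΨdef, toMeasure_apply _ _ hs, Stmt7Aux.psi_eq hα]
    set ν : Measure X := μ.toMeasure (Stmt7Aux.borelOM_le_caratheodory μ hBor) with hνdef
    have hν : ∀ s : Set X, MeasurableSet s → ν s = μ s := fun s hs =>
      toMeasure_apply μ _ hs
    set Z0 : Set X := B ∩ (federerDensity μ (closedSets X) (zetaDiam cα α)) ⁻¹' {0}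
      with hZ0def
    set Zt : Set X := B ∩ (federerDensity μ (closedSets X) (zetaDiam cα α)) ⁻¹' {⊤}
      with hZtdef
    have hZtm : MeasurableSet Zt := hBm.inter (hdmeas (measurableSet_singleton ⊤))
    have hμZ0 : μ Z0 = 0 :=
      Stmt7Aux.mu_zero_of_density_zero μ hα hc hreg h5 fun x hx => ⟨hBA hx.1, hx.2⟩
    have hψZt : hausdorffMeasureC X cα α Zt = 0 :=
      Stmt7Aux.psi_zero_of_density_top μ hα hc hBor h4 (fun x hx => hBA hx.1)
        fun x hx => hx.2
    have hμZt : μ Zt = 0 := by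
      have hAZ : A ∩ Zt = Zt := inter_eq_self_of_subset_right fun x hx => hBA hx.1
      have := h6 Zt (by rw [hAZ]; exact hψZt)
      rwa [hAZ] at this
    suffices hkey : ∀ σ : ℝ≥0∞, 1 < σ → σ ≠ ⊤ →
        μ B ≤ σ * omIntegral (hausdorffMeasureC X cα α) B
          (federerDensity μ (closedSets X) (zetaDiam cα α)) ∧
        omIntegral (hausdorffMeasureC X cα α) B
          (federerDensity μ (closedSets X) (zetaDiam cα α)) ≤ σ * μ B by
      have hof : ∀ s : ℝ, 1 < s → (1:ℝ≥0∞) < ENNReal.ofReal s := by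
        intro s hs
        rw [← ENNReal.ofReal_one, ENNReal.ofReal_lt_ofReal_iff (lt_trans one_pos hs)]
        exact hs
      refine le_antisymm ?_ ?_
      · exact Stmt7Aux.le_of_forall_ofReal_mul fun s hs =>
          (hkey _ (hof s hs) ENNReal.ofReal_ne_top).1
      · exact Stmt7Aux.le_of_forall_ofReal_mul fun s hs =>
          (hkey _ (hof s hs) ENNReal.ofReal_ne_top).2
    intro σ hσ1 hσtop
    have hσ0 : σ ≠ 0 := (lt_trans zero_lt_one hσ1).ne'
    set c : ℤ → ℝ≥0∞ := fun k => σ ^ k with hcdef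
    have hc0 : ∀ k, c k ≠ 0 := fun k => (ENNReal.zpow_pos hσ0 hσtop k).ne'
    have hcfin : ∀ k, c k ≠ ⊤ := fun k => (ENNReal.zpow_lt_top hσ0 hσtop k).ne
    have hcsucc : ∀ k : ℤ, c (k+1) = σ * c k := by
      intro k
      rw [hcdef]
      simp only
      rw [ENNReal.zpow_add hσ0 hσtop k 1, zpow_one, mul_comm]
    have hcmono : ∀ {m n : ℤ}, m ≤ n → c m ≤ c n := by
      intro m n hmn
      have h1 : c n = c m * σ ^ (n - m) := by
        rw [hcdef]
        simp only
        rw [← ENNReal.zpow_add hσ0 hσtop m (n-m), add_sub_cancel]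
      rw [h1]
      nth_rewrite 1 [← mul_one (c m)]
      refine mul_le_mul_right ?_ _
      have hj : (((n - m).toNat : ℤ)) = n - m := Int.toNat_of_nonneg (sub_nonneg.2 hmn)
      rw [← hj, zpow_natCast]
      exact one_le_pow₀ hσ1.le
    set P : ℤ → Set X := fun k =>
      B ∩ (federerDensity μ (closedSets X) (zetaDiam cα α)) ⁻¹' Ico (c k) (c (k+1))
      with hPdef
    have hPm : ∀ k, MeasurableSet (P k) := fun k => hBm.inter (hdmeas measurableSet_Ico)
    have hPB : ∀ k, P k ⊆ B := fun k => inter_subset_left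
    have hPdisj : Pairwise (Function.onFun Disjoint P) := by
      have haux : ∀ {k l : ℤ}, k < l → Disjoint (P k) (P l) := by
        intro k l hkl
        refine disjoint_left.2 fun x hxk hxl => ?_
        have h1 : federerDensity μ (closedSets X) (zetaDiam cα α) x < c (k+1) := hxk.2.2
        have h2 : c l ≤ federerDensity μ (closedSets X) (zetaDiam cα α) x := hxl.2.1
        have h3 : c (k+1) ≤ c l := hcmono hkl
        exact absurd ((h1.trans_le h3).trans_le h2) (lt_irrefl _)
      intro k l hkl
      rcases hkl.lt_or_gt with h | h
      · exact haux h
      · exact (haux h).symm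
    have hBdecomp : B ⊆ Z0 ∪ Zt ∪ ⋃ k, P k := by
      intro x hx
      rcases eq_or_ne (federerDensity μ (closedSets X) (zetaDiam cα α) x) 0 with h | h0
      · exact Or.inl (Or.inl ⟨hx, h⟩)
      rcases eq_or_ne (federerDensity μ (closedSets X) (zetaDiam cα α) x) ⊤ with h | htop
      · exact Or.inl (Or.inr ⟨hx, h⟩)
      obtain ⟨k, hk⟩ := ENNReal.exists_mem_Ico_zpow h0 htop hσ1 hσtop
      exact Or.inr (mem_iUnion.2 ⟨k, hx, hk⟩)
    have hup : ∀ k, μ (P k) ≤ c (k+1) * Ψ (P k) := by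
      intro k
      have h1 := Stmt7Aux.mu_le_of_density_lt μ hα hc hreg (B := P k) (t := c (k+1))
        (hcfin _) (fun x hx => hx.2.2)
      rwa [← hΨ _ (hPm k)] at h1
    have hlo : ∀ k, c k * Ψ (P k) ≤ μ (P k) := by
      intro k
      have h1 := Stmt7Aux.t_psi_le_mu μ hα hc hBor h4 ((hPB k).trans hBA) (hPm k)
        (hcfin k) (fun x hx => hx.2.1)
      rwa [← hΨ _ (hPm k)] at h1
    set Sf : ℝ → Set X := fun τ =>
      {x ∈ B | ENNReal.ofReal τ < federerDensity μ (closedSets X) (zetaDiam cα α) x}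
      with hSfdef
    have hSm : ∀ τ, MeasurableSet (Sf τ) := fun τ =>
      hBm.inter (hdmeas measurableSet_Ioi)
    have hSanti : ∀ k, Antitone fun τ => Ψ (Sf τ ∩ P k) := by
      intro k τ τ' hττ'
      refine measure_mono (inter_subset_inter_left _ ?_)
      intro x hx
      exact ⟨hx.1, (ENNReal.ofReal_le_ofReal hττ').trans_lt hx.2⟩
    have hpt : ∀ τ : ℝ, τ ∈ Ioi (0:ℝ) →
        hausdorffMeasureC X cα α (Sf τ) = ∑' k : ℤ, Ψ (Sf τ ∩ P k) := by
      intro τ hτ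
      have hsub1 : Sf τ ⊆ (Sf τ ∩ Zt) ∪ ⋃ k, Sf τ ∩ P k := by
        intro x hx
        have h0 : federerDensity μ (closedSets X) (zetaDiam cα α) x ≠ 0 := by
          intro h
          have h2 := hx.2
          rw [h] at h2
          exact absurd h2 (by simp)
        rcases eq_or_ne (federerDensity μ (closedSets X) (zetaDiam cα α) x) ⊤ with h | htop
        · exact Or.inl (mem_inter hx (mem_inter hx.1 (mem_preimage.2 (mem_singleton_iff.2 h))))
        obtain ⟨k, hk⟩ := ENNReal.exists_mem_Ico_zpow h0 htop hσ1 hσtop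
        exact Or.inr (mem_iUnion.2 ⟨k, mem_inter hx (mem_inter hx.1 (mem_preimage.2 hk))⟩)
      have e1 : Ψ (Sf τ) ≤ ∑' k : ℤ, Ψ (Sf τ ∩ P k) := by
        refine (measure_mono hsub1).trans ?_
        refine (measure_union_le _ _).trans ?_
        have hz : Ψ (Sf τ ∩ Zt) = 0 := by
          refine le_antisymm ?_ (zero_le)
          rw [hΨ _ ((hSm τ).inter hZtm), ← hψZt]
          exact Stmt7Aux.psi_mono hα inter_subset_right
        rw [hz, zero_add]
        exact measure_iUnion_le _
      have e2 : ∑' k : ℤ, Ψ (Sf τ ∩ P k) ≤ Ψ (Sf τ) := by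
        rw [← measure_iUnion (fun k l hkl => (hPdisj hkl).mono inter_subset_right
          inter_subset_right) (fun k => (hSm τ).inter (hPm k))]
        exact measure_mono (iUnion_subset fun k => inter_subset_left)
      rw [← hΨ _ (hSm τ)]
      exact le_antisymm e1 e2
    have hInt : omIntegral (hausdorffMeasureC X cα α) B
        (federerDensity μ (closedSets X) (zetaDiam cα α))
        = ∑' k : ℤ, ∫⁻ τ in Ioi (0:ℝ), Ψ (Sf τ ∩ P k) := by
      simp only [omIntegral]
      rw [setLIntegral_congr_fun measurableSet_Ioi hpt]
      exact lintegral_tsum fun k => ((hSanti k).measurable).aemeasurable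
    have hIk_lo : ∀ k : ℤ, c k * Ψ (P k) ≤ ∫⁻ τ in Ioi (0:ℝ), Ψ (Sf τ ∩ P k) := by
      intro k
      have hrkpos : 0 < (c k).toReal := ENNReal.toReal_pos (hc0 k) (hcfin k)
      have hofrk : ENNReal.ofReal (c k).toReal = c k := ENNReal.ofReal_toReal (hcfin k)
      have hconst : ∀ τ ∈ Ioo (0:ℝ) (c k).toReal, Ψ (P k) = Ψ (Sf τ ∩ P k) := by
        intro τ hτ
        congr 1
        have hsub : P k ⊆ Sf τ := by
          intro x hx
          have h1 : ENNReal.ofReal τ < c k := by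
            rw [← hofrk]
            exact (ENNReal.ofReal_lt_ofReal_iff hrkpos).2 hτ.2
          exact ⟨hPB k hx, h1.trans_le hx.2.1⟩
        exact (inter_eq_self_of_subset_right hsub).symm
      calc c k * Ψ (P k) = ∫⁻ _ in Ioo (0:ℝ) (c k).toReal, Ψ (P k) := by
            rw [setLIntegral_const, Real.volume_Ioo, sub_zero, hofrk, mul_comm]
        _ = ∫⁻ τ in Ioo (0:ℝ) (c k).toReal, Ψ (Sf τ ∩ P k) :=
            setLIntegral_congr_fun measurableSet_Ioo hconst
        _ ≤ ∫⁻ τ in Ioi (0:ℝ), Ψ (Sf τ ∩ P k) :=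
            lintegral_mono' (Measure.restrict_mono Ioo_subset_Ioi_self le_rfl) le_rfl
    have hIk_up : ∀ k : ℤ, (∫⁻ τ in Ioi (0:ℝ), Ψ (Sf τ ∩ P k)) ≤ c (k+1) * Ψ (P k) := by
      intro k
      have hofrk : ENNReal.ofReal (c (k+1)).toReal = c (k+1) :=
        ENNReal.ofReal_toReal (hcfin _)
      have hbound : ∀ τ ∈ Ioi (0:ℝ), Ψ (Sf τ ∩ P k) ≤
          (Ioo (0:ℝ) (c (k+1)).toReal).indicator (fun _ => Ψ (P k)) τ := by
        intro τ hτ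
        rcases lt_or_ge τ (c (k+1)).toReal with h | h
        · rw [indicator_of_mem (mem_Ioo.2 ⟨mem_Ioi.1 hτ, h⟩)]
          exact measure_mono inter_subset_right
        · have hempty : Sf τ ∩ P k = ∅ := by
            refine eq_empty_iff_forall_notMem.2 fun x hx => ?_
            have h1 : federerDensity μ (closedSets X) (zetaDiam cα α) x < c (k+1) :=
              hx.2.2.2
            have h2 : c (k+1) ≤ ENNReal.ofReal τ := by
              rw [← hofrk]
              exact ENNReal.ofReal_le_ofReal h
            exact absurd ((h1.trans_le h2).trans hx.1.2) (lt_irrefl _)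
          rw [hempty]
          simp
      calc (∫⁻ τ in Ioi (0:ℝ), Ψ (Sf τ ∩ P k))
          ≤ ∫⁻ τ in Ioi (0:ℝ),
              (Ioo (0:ℝ) (c (k+1)).toReal).indicator (fun _ => Ψ (P k)) τ :=
            setLIntegral_mono (measurable_const.indicator measurableSet_Ioo) hbound
        _ ≤ ∫⁻ τ, (Ioo (0:ℝ) (c (k+1)).toReal).indicator (fun _ => Ψ (P k)) τ :=
            setLIntegral_le_lintegral _ _
        _ = c (k+1) * Ψ (P k) := by
            rw [lintegral_indicator measurableSet_Ioo, setLIntegral_const,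
              Real.volume_Ioo, sub_zero, hofrk, mul_comm]
    constructor
    · calc μ B ≤ μ (Z0 ∪ Zt ∪ ⋃ k, P k) := μ.mono hBdecomp
        _ ≤ μ (Z0 ∪ Zt) + μ (⋃ k, P k) := measure_union_le _ _
        _ ≤ (μ Z0 + μ Zt) + μ (⋃ k, P k) :=
            add_le_add_left (measure_union_le _ _) _
        _ = μ (⋃ k, P k) := by rw [hμZ0, hμZt, add_zero, zero_add]
        _ ≤ ∑' k, μ (P k) := measure_iUnion_le _
        _ ≤ ∑' k, c (k+1) * Ψ (P k) := ENNReal.tsum_le_tsum hup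
        _ = ∑' k, σ * (c k * Ψ (P k)) := by
            refine tsum_congr fun k => ?_
            rw [hcsucc k, mul_assoc]
        _ = σ * ∑' k, c k * Ψ (P k) := ENNReal.tsum_mul_left
        _ ≤ σ * ∑' k, ∫⁻ τ in Ioi (0:ℝ), Ψ (Sf τ ∩ P k) :=
            mul_le_mul_right (ENNReal.tsum_le_tsum hIk_lo) σ
        _ = σ * omIntegral (hausdorffMeasureC X cα α) B
            (federerDensity μ (closedSets X) (zetaDiam cα α)) := by rw [hInt]
    · have hsum : ∑' k, μ (P k) ≤ μ B := by
        calc ∑' k, μ (P k) = ∑' k, ν (P k) := tsum_congr fun k => (hν _ (hPm k)).symm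
          _ = ν (⋃ k, P k) := (measure_iUnion hPdisj hPm).symm
          _ ≤ ν B := measure_mono (iUnion_subset hPB)
          _ = μ B := hν B hBm
      rw [hInt]
      calc (∑' k : ℤ, ∫⁻ τ in Ioi (0:ℝ), Ψ (Sf τ ∩ P k))
          ≤ ∑' k, c (k+1) * Ψ (P k) := ENNReal.tsum_le_tsum hIk_up
        _ = ∑' k, σ * (c k * Ψ (P k)) := by
            refine tsum_congr fun k => ?_
            rw [hcsucc k, mul_assoc]
        _ = σ * ∑' k, c k * Ψ (P k) := ENNReal.tsum_mul_left
        _ ≤ σ * ∑' k, μ (P k) := mul_le_mul_right (ENNReal.tsum_le_tsum hlo) σ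
        _ ≤ σ * μ B := mul_le_mul_right hsum σ
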